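/- Assume F̄(β(t))/F̄(γ(t)) → g ∈ (0,1) and F̄(α_{k,0}(t))/F̄(β(t)) → a_{k,0} ∈ (0,1]. Then for k ≥ 0, with z > 0 and z_β = z/F̄(β(t)), the limit lim_{t→∞} P{ν ≥ z_β, N_+(ν) = k, N_-(ν) = 0} = (g(1−g)^k a_{k,0}/k!) · ∫_{z/g}^∞ v^k e^{−v} dv. -/

import Mathlib

open MeasureTheory ProbabilityTheory Filter Set
open scoped ENNReal

/-- Numbers `(N₊(n), N₋(n))` of strengthening resp. weakening (harmful nonfatal) shocks
among the first `n` shocks `X 0, …, X (n-1)`. -/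
noncomputable def shockCounts (γ β α : ℝ) (b c : ℕ → ℝ) (X : ℕ → ℝ) : ℕ → ℕ × ℕ
  | 0 => (0, 0)
  | n + 1 =>
      let p := shockCounts γ β α b c X n
      (if γ ≤ X n ∧ X n < β ∧ p.2 = 0 then p.1 + 1 else p.1,
       if β ≤ X n ∧ X n < α + b p.1 - c p.2 then p.2 + 1 else p.2)

/-- The `(i+1)`-th shock `X i` is fatal: it exceeds the current critical boundary. -/
def fatalShock (γ β α : ℝ) (b c : ℕ → ℝ) (X : ℕ → ℝ) (i : ℕ) : Prop :=
  α + b (shockCounts γ β α b c X i).1 - c (shockCounts γ β α b c X i).2 ≤ X i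

/-- 0-based index of the first fatal shock (junk value if there is none);
the paper's `ν` equals this plus one. -/
noncomputable def nuShock (γ β α : ℝ) (b c : ℕ → ℝ) (X : ℕ → ℝ) : ℕ :=
  sInf {i | fatalShock γ β α b c X i}

/-- Survival function `F̄(x) = P(X > x)` of a law `μ` on `ℝ`, as a real number. -/
noncomputable def survival (μ : Measure ℝ) (x : ℝ) : ℝ := (μ (Set.Ioi x)).toReal


section Aux
variable {γ β α : ℝ} {b c : ℕ → ℝ} {X : ℕ → ℝ}

lemma shockCounts_snd_mono : Monotone fun n => (shockCounts γ β α b c X n).2 := by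
  apply monotone_nat_of_le_succ
  intro n
  simp only [shockCounts]
  split <;> simp

lemma shockCounts_eq_of_lt (n : ℕ) (h : ∀ i < n, X i < β) :
    shockCounts γ β α b c X n = (((Finset.range n).filter fun i => γ ≤ X i).card, 0) := by
  induction n with
  | zero => simp [shockCounts]
  | succ n ih =>
    have hn : ∀ i < n, X i < β := fun i hi => h i (hi.trans (Nat.lt_succ_self n))
    have hXn : X n < β := h n (Nat.lt_succ_self n)
    rw [shockCounts, ih hn]
    have : ¬ (β ≤ X n ∧ X n < α + b (((Finset.range n).filter fun i => γ ≤ X i).card)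
        - c 0) := fun hc => absurd hc.1 (not_le.mpr hXn)
    rw [Finset.range_add_one, Finset.filter_insert]
    by_cases hγn : γ ≤ X n
    · rw [if_pos hγn, Finset.card_insert_of_notMem (by simp)]
      simp only [if_neg this, Prod.mk.injEq]
      exact ⟨by rw [if_pos ⟨hγn, hXn, by trivial⟩], by trivial⟩
    · rw [if_neg hγn]
      simp only [if_neg this, Prod.mk.injEq]
      refine ⟨by rw [if_neg (by tauto)], by trivial⟩

lemma not_fatal_of_lt (hβα : ∀ k l, β ≤ α + b k - c l) {i : ℕ} (h : X i < β) :
    ¬ fatalShock γ β α b c X i := by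
  intro hf
  exact absurd (le_trans (hβα _ _) hf) (not_le.mpr h)

lemma lt_beta_of_counts {m : ℕ} (hm : (shockCounts γ β α b c X m).2 = 0)
    (hf : ∀ i < m, ¬ fatalShock γ β α b c X i) : ∀ i < m, X i < β := by
  induction m with
  | zero => intro i hi; exact absurd hi (Nat.not_lt_zero i)
  | succ n ih =>
    have hn0 : (shockCounts γ β α b c X n).2 = 0 :=
      Nat.le_zero.mp (hm ▸ shockCounts_snd_mono (Nat.le_succ n))
    have hprev := ih hn0 (fun i hi => hf i (hi.trans (Nat.lt_succ_self n)))
    intro i hi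
    rcases Nat.lt_succ_iff_lt_or_eq.mp hi with hi | rfl
    · exact hprev i hi
    have hnotfatal : X i < α + b (shockCounts γ β α b c X i).1
        - c (shockCounts γ β α b c X i).2 :=
      not_le.mp (hf i (Nat.lt_succ_self i))
    by_contra hX
    push_neg at hX
    have : (shockCounts γ β α b c X (i+1)).2 = (shockCounts γ β α b c X i).2 + 1 := by
      simp only [shockCounts]
      rw [if_pos ⟨hX, hnotfatal⟩]
    rw [hm] at this
    omega

lemma event_iff (hβα : ∀ k l, β ≤ α + b k - c l) (hc0 : c 0 = 0) (R : ℝ) (k : ℕ) :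
    ((∃ i, fatalShock γ β α b c X i) ∧ R ≤ (nuShock γ β α b c X : ℝ) + 1 ∧
      shockCounts γ β α b c X (nuShock γ β α b c X) = (k, 0))
    ↔ ∃ m : ℕ, (R ≤ (m : ℝ) + 1 ∧ ((Finset.range m).filter fun i => γ ≤ X i).card = k) ∧
        (∀ i < m, X i < β) ∧ α + b k ≤ X m := by
  constructor
  · rintro ⟨hex, hR, hcounts⟩
    set ν := nuShock γ β α b c X with hν
    have hmem : ν ∈ {i | fatalShock γ β α b c X i} := Nat.sInf_mem hex
    have hnot : ∀ i < ν, ¬ fatalShock γ β α b c X i := fun i hi =>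
      Nat.notMem_of_lt_sInf hi
    have hlt : ∀ i < ν, X i < β :=
      lt_beta_of_counts (by rw [hcounts]) hnot
    refine ⟨ν, ⟨hR, ?_⟩, hlt, ?_⟩
    · have := shockCounts_eq_of_lt (X := X) (γ := γ) (α := α) (b := b) (c := c) ν hlt
      rw [hcounts] at this
      exact (Prod.mk.injEq _ _ _ _ ▸ this).1.symm
    · have hfatal : α + b (shockCounts γ β α b c X ν).1
          - c (shockCounts γ β α b c X ν).2 ≤ X ν := hmem
      rw [hcounts] at hfatal
      simpa [hc0] using hfatal
  · rintro ⟨m, ⟨hR, hcard⟩, hlt, hX⟩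
    have hcounts : shockCounts γ β α b c X m = (k, 0) := by
      rw [shockCounts_eq_of_lt m hlt, hcard]
    have hfatalm : fatalShock γ β α b c X m := by
      show α + b _ - c _ ≤ X m
      rw [hcounts]
      simpa [hc0] using hX
    have hν : nuShock γ β α b c X = m := by
      refine le_antisymm (Nat.sInf_le hfatalm) ?_
      by_contra hlt'
      push_neg at hlt'
      have hmem : nuShock γ β α b c X ∈ {i | fatalShock γ β α b c X i} :=
        Nat.sInf_mem ⟨m, hfatalm⟩
      exact not_fatal_of_lt hβα (hlt _ hlt') hmem
    exact ⟨⟨m, hfatalm⟩, by rw [hν]; exact_mod_cast hR, by rw [hν]; exact hcounts⟩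

end Aux
open scoped ENNReal


variable {μ : Measure ℝ} [IsProbabilityMeasure μ]

lemma meas_Ici (hcont : ∀ x : ℝ, μ {x} = 0) (x : ℝ) : μ (Set.Ici x) = μ (Set.Ioi x) := by
  rw [← Set.Ioi_union_left, measure_union (by simp) (measurableSet_singleton x), hcont, add_zero]

lemma meas_Ico_toReal (hcont : ∀ x : ℝ, μ {x} = 0) {γ β : ℝ} (hγβ : γ < β) :
    (μ (Set.Ico γ β)).toReal = survival μ γ - survival μ β := by
  have h1 : μ (Set.Ico γ β) = μ (Set.Ioo γ β) := by
    rw [← Set.Ioo_union_left hγβ, measure_union (by simp) (measurableSet_singleton γ),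
      hcont, add_zero]
  have h2 : μ (Set.Ioi γ) = μ (Set.Ioo γ β) + μ (Set.Ici β) := by
    rw [← Set.Ioo_union_Ici_eq_Ioi hγβ, measure_union ?_ measurableSet_Ici]
    exact Set.disjoint_left.mpr fun x hx hx' => absurd hx.2 (not_lt.mpr hx')
  rw [meas_Ici hcont] at h2
  have h3 := congrArg ENNReal.toReal h2
  rw [ENNReal.toReal_add (measure_ne_top μ _) (measure_ne_top μ _)] at h3
  rw [h1]
  unfold survival
  rw [h3]
  ring

lemma meas_Iio_toReal (hcont : ∀ x : ℝ, μ {x} = 0) (γ : ℝ) :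
    (μ (Set.Iio γ)).toReal = 1 - survival μ γ := by
  have h2 : μ (Set.Iio γ) + μ (Set.Ici γ) = 1 := by
    have hd : Disjoint (Set.Iio γ) (Set.Ici γ) :=
      Set.disjoint_left.mpr fun x hx hx' => absurd (Set.mem_Iio.mp hx) (not_lt.mpr hx')
    have := (measure_union (μ := μ) hd measurableSet_Ici).symm
    rw [Set.Iio_union_Ici, measure_univ] at this
    exact this
  rw [meas_Ici hcont] at h2
  have h3 := congrArg ENNReal.toReal h2
  rw [ENNReal.toReal_add (measure_ne_top μ _) (measure_ne_top μ _)] at h3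
  unfold survival
  simp only [ENNReal.toReal_one] at h3
  linarith

lemma survival_nonneg (x : ℝ) : 0 ≤ survival μ x := ENNReal.toReal_nonneg

lemma survival_le_one (x : ℝ) : survival μ x ≤ 1 := by
  have := prob_le_one (μ := μ) (s := Set.Ioi x)
  calc survival μ x ≤ (1 : ℝ≥0∞).toReal := ENNReal.toReal_mono (by simp) this
    _ = 1 := by simp

lemma survival_mono {x y : ℝ} (h : x ≤ y) : survival μ y ≤ survival μ x :=
  ENNReal.toReal_mono (measure_ne_top μ _) (measure_mono (Set.Ioi_subset_Ioi h))

section Prob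
variable {Ω : Type*} [MeasurableSpace Ω]

/-- The elementary cell: interval constraints for each coordinate. -/
def cellSet (γ β bk : ℝ) (m : ℕ) (S : Finset ℕ) (i : ℕ) : Set ℝ :=
  if i = m then Set.Ici bk else if i ∈ S then Set.Ico γ β else Set.Iio γ

lemma cellSet_measurable (γ β bk : ℝ) (m : ℕ) (S : Finset ℕ) (i : ℕ) :
    MeasurableSet (cellSet γ β bk m S i) := by
  unfold cellSet
  split_ifs <;> first | exact measurableSet_Ici | exact measurableSet_Ico | exact measurableSet_Iio

/-- The event that the first fatal shock occurs at time `m` with `k` strengthening shocks. -/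
def goodSet (γ β bk : ℝ) (X : ℕ → Ω → ℝ) (k m : ℕ) : Set Ω :=
  {ω | (∀ i < m, X i ω < β) ∧ (((Finset.range m).filter fun i => γ ≤ X i ω).card = k)
      ∧ bk ≤ X m ω}

lemma goodSet_eq_biUnion (γ β bk : ℝ) (hγβ : γ < β) (X : ℕ → Ω → ℝ) (k m : ℕ) :
    goodSet γ β bk X k m = ⋃ S ∈ Finset.powersetCard k (Finset.range m),
      ⋂ i ∈ Finset.range (m+1), X i ⁻¹' cellSet γ β bk m S i := by
  ext ω
  simp only [goodSet, Set.mem_setOf_eq, Set.mem_iUnion, Set.mem_iInter, Set.mem_preimage,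
    Finset.mem_powersetCard, Finset.mem_range]
  constructor
  · rintro ⟨hlt, hcard, hX⟩
    refine ⟨(Finset.range m).filter fun i => γ ≤ X i ω,
      ⟨Finset.filter_subset _ _, hcard⟩, ?_⟩
    intro i hi
    unfold cellSet
    by_cases him : i = m
    · rw [if_pos him, him]; exact hX
    · have hiltm : i < m := by omega
      rw [if_neg him]
      by_cases hγi : γ ≤ X i ω
      · rw [if_pos (by simp [Finset.mem_filter, hiltm, hγi])]
        exact ⟨hγi, hlt i hiltm⟩
      · rw [if_neg (by simp [Finset.mem_filter, hγi])]
        exact not_le.mp hγi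
  · rintro ⟨S, ⟨hsub, hcard⟩, hmem⟩
    have hlt : ∀ i < m, X i ω < β := by
      intro i hi
      have := hmem i (by omega)
      unfold cellSet at this
      rw [if_neg (by omega)] at this
      by_cases hiS : i ∈ S
      · rw [if_pos hiS] at this; exact this.2
      · rw [if_neg hiS] at this; exact lt_trans this hγβ
    have hfil : (Finset.range m).filter (fun i => γ ≤ X i ω) = S := by
      ext i
      simp only [Finset.mem_filter, Finset.mem_range]
      constructor
      · rintro ⟨hiltm, hγi⟩
        by_contra hiS
        have := hmem i (by omega)
        unfold cellSet at this
        rw [if_neg (by omega), if_neg hiS] at this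
        exact absurd hγi (not_le.mpr this)
      · intro hiS
        have hiltm : i < m := Finset.mem_range.mp (hsub hiS)
        have := hmem i (by omega)
        unfold cellSet at this
        rw [if_neg (by omega), if_pos hiS] at this
        exact ⟨hiltm, this.1⟩
    have hXm := hmem m (by omega)
    unfold cellSet at hXm
    rw [if_pos rfl] at hXm
    exact ⟨hlt, by rw [hfil]; exact hcard, hXm⟩

lemma goodSet_disjoint (γ β bk : ℝ) (hβbk : β ≤ bk) (X : ℕ → Ω → ℝ) (k : ℕ)
    {m m' : ℕ} (h : m < m') : Disjoint (goodSet γ β bk X k m) (goodSet γ β bk X k m') := by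
  apply Set.disjoint_left.mpr
  rintro ω ⟨_, _, hX⟩ ⟨hlt', _, _⟩
  exact absurd (le_trans hβbk hX) (not_le.mpr (hlt' m h))

lemma cell_inter_disjoint (γ β bk : ℝ) (X : ℕ → Ω → ℝ) {m : ℕ} {S S' : Finset ℕ}
    (hS : S ∈ Finset.powersetCard k (Finset.range m))
    (hS' : S' ∈ Finset.powersetCard k (Finset.range m)) (hne : S ≠ S') :
    Disjoint (⋂ i ∈ Finset.range (m+1), X i ⁻¹' cellSet γ β bk m S i)
      (⋂ i ∈ Finset.range (m+1), X i ⁻¹' cellSet γ β bk m S' i) := by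
  obtain ⟨hsub, hcard⟩ := Finset.mem_powersetCard.mp hS
  obtain ⟨hsub', hcard'⟩ := Finset.mem_powersetCard.mp hS'
  have hex : (∃ i ∈ S, i ∉ S') ∨ (∃ i ∈ S', i ∉ S) := by
    by_contra hcon
    push_neg at hcon
    exact hne (Finset.Subset.antisymm hcon.1 hcon.2)
  -- helper
  have key : ∀ (T T' : Finset ℕ), T ⊆ Finset.range m → T' ⊆ Finset.range m →
      (∃ i ∈ T, i ∉ T') →
      Disjoint (⋂ i ∈ Finset.range (m+1), X i ⁻¹' cellSet γ β bk m T i)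
        (⋂ i ∈ Finset.range (m+1), X i ⁻¹' cellSet γ β bk m T' i) := by
    rintro T T' hT hT' ⟨i, hiT, hiT'⟩
    have him : i < m := Finset.mem_range.mp (hT hiT)
    apply Set.disjoint_left.mpr
    intro ω hω hω'
    simp only [Set.mem_iInter, Set.mem_preimage] at hω hω'
    have h1 := hω i (Finset.mem_range.mpr (by omega))
    have h2 := hω' i (Finset.mem_range.mpr (by omega))
    unfold cellSet at h1 h2
    rw [if_neg (by omega), if_pos hiT] at h1
    rw [if_neg (by omega), if_neg hiT'] at h2
    exact absurd h1.1 (not_le.mpr h2)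
  rcases hex with ⟨i, hi, hi'⟩ | ⟨i, hi, hi'⟩
  · exact key S S' hsub hsub' ⟨i, hi, hi'⟩
  · exact (key S' S hsub' hsub ⟨i, hi, hi'⟩).symm

end Prob

section ProbEq
variable {Ω : Type*} [MeasurableSpace Ω]

lemma prob_eq (P : Measure Ω) [IsProbabilityMeasure P]
    (μ : Measure ℝ) [IsProbabilityMeasure μ] (X : ℕ → Ω → ℝ)
    (hindep : iIndepFun X P)
    (hdist : ∀ i, Measure.map (X i) P = μ)
    (hcont : ∀ x : ℝ, μ {x} = 0)
    (γ β α : ℝ) (b c : ℕ → ℝ) (hγβ : γ < β)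
    (hβα : ∀ k l, β ≤ α + b k - c l) (hc0 : c 0 = 0) (k : ℕ) (R : ℝ) :
    (P {ω | (∃ i, fatalShock γ β α b c (fun j => X j ω) i) ∧
        R ≤ (nuShock γ β α b c (fun j => X j ω) : ℝ) + 1 ∧
        shockCounts γ β α b c (fun j => X j ω)
          (nuShock γ β α b c (fun j => X j ω)) = (k, 0)}).toReal
    = ∑' m : ℕ, (if R ≤ (m:ℝ)+1 then
        (m.choose k : ℝ) * (survival μ γ - survival μ β)^k
          * (1 - survival μ γ)^(m-k) * survival μ (α + b k) else 0) := by
  classical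
  have hβbk : β ≤ α + b k := by have := hβα k 0; rwa [hc0, sub_zero] at this
  -- a.e. measurability of the shocks
  have haem : ∀ i, AEMeasurable (X i) P := by
    intro i
    by_contra h
    have h0 := Measure.map_of_not_aemeasurable h
    rw [hdist i] at h0
    exact (IsProbabilityMeasure.ne_zero μ) h0
  have hpre : ∀ i (A : Set ℝ), MeasurableSet A → P ((X i) ⁻¹' A) = μ A := by
    intro i A hA
    rw [← hdist i, Measure.map_apply_of_aemeasurable (haem i) hA]
  -- the elementary cells
  set bk := α + b k with hbk
  set Cs : ℕ → Finset ℕ → Set Ω := fun m S =>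
    ⋂ i ∈ Finset.range (m+1), X i ⁻¹' cellSet γ β bk m S i with hCs
  have hCnull : ∀ m S, NullMeasurableSet (Cs m S) P := by
    intro m S
    rw [hCs]
    simp only
    rw [← Finset.set_biInter_coe]
    exact NullMeasurableSet.biInter (Finset.countable_toSet _)
      (fun i _ => ((haem i).nullMeasurable) (cellSet_measurable γ β bk m S i))
  have hCmeasure : ∀ m (S : Finset ℕ), S ∈ Finset.powersetCard k (Finset.range m) →
      P (Cs m S) = (μ (Set.Ico γ β))^k * (μ (Set.Iio γ))^(m-k) * μ (Set.Ici bk) := by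
    intro m S hS
    obtain ⟨hsub, hcard⟩ := Finset.mem_powersetCard.mp hS
    rw [hCs]
    simp only
    rw [hindep.measure_inter_preimage_eq_mul (Finset.range (m+1))
      (fun i _ => cellSet_measurable γ β bk m S i)]
    rw [Finset.prod_congr rfl (fun i _ => hpre i _ (cellSet_measurable γ β bk m S i))]
    rw [Finset.prod_range_succ]
    have hm : cellSet γ β bk m S m = Set.Ici bk := if_pos rfl
    have hprod : ∏ i ∈ Finset.range m, μ (cellSet γ β bk m S i)
        = (μ (Set.Ico γ β))^k * (μ (Set.Iio γ))^(m-k) := by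
      rw [← Finset.prod_sdiff hsub]
      have h1 : ∀ i ∈ S, μ (cellSet γ β bk m S i) = μ (Set.Ico γ β) := by
        intro i hi
        have him : i ≠ m := by have := Finset.mem_range.mp (hsub hi); omega
        unfold cellSet
        rw [if_neg him, if_pos hi]
      have h2 : ∀ i ∈ Finset.range m \ S, μ (cellSet γ β bk m S i) = μ (Set.Iio γ) := by
        intro i hi
        obtain ⟨hir, his⟩ := Finset.mem_sdiff.mp hi
        have him : i ≠ m := by have := Finset.mem_range.mp hir; omega
        unfold cellSet
        rw [if_neg him, if_neg his]
      rw [Finset.prod_congr rfl h2, Finset.prod_congr rfl h1, Finset.prod_const,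
        Finset.prod_const, Finset.card_sdiff_of_subset hsub, hcard, Finset.card_range]
      ring
    rw [hm, hprod]
  -- the per-time sets
  set Bs : ℕ → Set Ω := fun m => goodSet γ β bk X k m with hBs
  have hBnull : ∀ m, NullMeasurableSet (Bs m) P := by
    intro m
    rw [hBs]
    simp only
    rw [goodSet_eq_biUnion γ β bk hγβ X k m, ← Finset.set_biUnion_coe]
    exact NullMeasurableSet.biUnion (Finset.countable_toSet _) (fun S _ => hCnull m S)
  have hBmeasure : ∀ m, P (Bs m)
      = (m.choose k) * ((μ (Set.Ico γ β))^k * (μ (Set.Iio γ))^(m-k) * μ (Set.Ici bk)) := by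
    intro m
    rw [hBs]
    simp only
    rw [goodSet_eq_biUnion γ β bk hγβ X k m]
    have hd : Set.Pairwise ↑(Finset.powersetCard k (Finset.range m))
        (Function.onFun (AEDisjoint P) (Cs m)) := by
      intro S hS S' hS' hne
      exact (cell_inter_disjoint γ β bk X (Finset.mem_coe.mp hS)
        (Finset.mem_coe.mp hS') hne).aedisjoint
    rw [measure_biUnion_finset₀ hd (fun S _ => hCnull m S)]
    rw [Finset.sum_congr rfl (fun S hS => hCmeasure m S hS), Finset.sum_const,
      Finset.card_powersetCard, Finset.card_range, nsmul_eq_mul]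
  set Ts : ℕ → Set Ω := fun m => if R ≤ (m:ℝ)+1 then Bs m else ∅ with hTs
  have hTnull : ∀ m, NullMeasurableSet (Ts m) P := by
    intro m
    rw [hTs]
    simp only
    split_ifs
    · exact hBnull m
    · exact nullMeasurableSet_empty
  have hTdisj : Pairwise (Function.onFun (AEDisjoint P) Ts) := by
    intro m m' hne
    have : Disjoint (Ts m) (Ts m') := by
      rw [hTs]
      simp only
      split_ifs
      · rcases Nat.lt_or_ge m m' with h | h
        · exact goodSet_disjoint γ β bk hβbk X k h
        · have : m' < m := by omega
          exact (goodSet_disjoint γ β bk hβbk X k this).symm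
      all_goals simp
    exact this.aedisjoint
  -- the event equals the union
  have hEvent : {ω | (∃ i, fatalShock γ β α b c (fun j => X j ω) i) ∧
        R ≤ (nuShock γ β α b c (fun j => X j ω) : ℝ) + 1 ∧
        shockCounts γ β α b c (fun j => X j ω)
          (nuShock γ β α b c (fun j => X j ω)) = (k, 0)} = ⋃ m, Ts m := by
    ext ω
    rw [Set.mem_setOf_eq, event_iff hβα hc0 R k, Set.mem_iUnion]
    constructor
    · rintro ⟨m, ⟨hR, hcard⟩, hlt, hX⟩
      exact ⟨m, by rw [hTs]; simp only; rw [if_pos hR]; exact ⟨hlt, hcard, hX⟩⟩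
    · rintro ⟨m, hm⟩
      rw [hTs] at hm
      simp only at hm
      split_ifs at hm with hR
      · obtain ⟨hlt, hcard, hX⟩ := hm
        exact ⟨m, ⟨hR, hcard⟩, hlt, hX⟩
      · exact absurd hm (Set.notMem_empty ω)
  rw [hEvent, measure_iUnion₀ hTdisj hTnull,
    ENNReal.tsum_toReal_eq (fun m => measure_ne_top P _)]
  apply tsum_congr
  intro m
  rw [hTs]
  simp only
  split_ifs with hR
  · rw [hBmeasure m]
    rw [ENNReal.toReal_mul, ENNReal.toReal_mul, ENNReal.toReal_mul, ENNReal.toReal_pow,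
      ENNReal.toReal_pow, ENNReal.toReal_natCast, meas_Ico_toReal hcont hγβ,
      meas_Iio_toReal hcont, meas_Ici hcont]
    unfold survival
    ring
  · simp

end ProbEq


noncomputable def Rsum (x : ℝ) (k M : ℕ) : ℝ :=
  ∑ j ∈ Finset.range (k+1), (M.choose j : ℝ) * x ^ (M - j) * (1 - x) ^ j

lemma Rsum_sub {x : ℝ} (k M : ℕ) (hkM : k ≤ M) :
    Rsum x k M - Rsum x k (M+1) = (M.choose k : ℝ) * x ^ (M - k) * (1 - x) ^ (k+1) := by
  have hA : Rsum x k (M+1) = (Rsum x k M) * x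
      + ∑ j ∈ Finset.range k, (M.choose j : ℝ) * x ^ (M - j) * (1 - x) ^ (j+1) := by
    unfold Rsum
    rw [Finset.sum_range_succ' (fun j => ((M+1).choose j : ℝ) * x ^ (M+1-j) * (1-x)^j) k,
      Finset.sum_mul,
      Finset.sum_range_succ' (fun j => (M.choose j : ℝ) * x ^ (M-j) * (1-x)^j * x) k]
    have hsplit : ∀ j ∈ Finset.range k,
        (((M+1).choose (j+1) : ℝ) * x ^ (M+1-(j+1)) * (1-x)^(j+1))
        = ((M.choose (j+1) : ℝ) * x ^ (M-(j+1)) * (1-x)^(j+1) * x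
          + (M.choose j : ℝ) * x ^ (M-j) * (1-x)^(j+1)) := by
      intro j hj
      have hjM : j + 1 ≤ M := le_trans (Finset.mem_range.mp hj) hkM
      have h1 : M + 1 - (j+1) = (M - (j+1)) + 1 := by omega
      have h2 : M - j = (M - (j+1)) + 1 := by omega
      rw [Nat.choose_succ_succ, h1, h2]
      push_cast
      ring
    rw [Finset.sum_congr rfl hsplit, Finset.sum_add_distrib]
    have h3 : M + 1 - 0 = (M - 0) + 1 := by omega
    rw [h3, Nat.choose_zero_right, Nat.choose_zero_right, pow_succ]
    push_cast
    ring
  rw [hA]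
  have hB : Rsum x k M - (Rsum x k M * x
      + ∑ j ∈ Finset.range k, (M.choose j : ℝ) * x ^ (M - j) * (1 - x) ^ (j+1))
      = Rsum x k M * (1 - x)
        - ∑ j ∈ Finset.range k, (M.choose j : ℝ) * x ^ (M - j) * (1 - x) ^ (j+1) := by
    ring
  rw [hB]
  unfold Rsum
  rw [Finset.sum_mul]
  have hcongr : ∀ j ∈ Finset.range (k+1),
      ((M.choose j : ℝ) * x ^ (M - j) * (1 - x) ^ j) * (1 - x)
      = (M.choose j : ℝ) * x ^ (M - j) * (1 - x) ^ (j+1) := by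
    intro j _; ring
  rw [Finset.sum_congr rfl hcongr, Finset.sum_range_succ]
  ring

lemma choose_pow_tendsto {x : ℝ} (hx0 : 0 ≤ x) (hx1 : x < 1) (j : ℕ) :
    Tendsto (fun M : ℕ => (M.choose j : ℝ) * x ^ (M - j)) atTop (nhds 0) := by
  rw [← tendsto_add_atTop_iff_nat j]
  have key : Tendsto (fun N : ℕ => (2:ℝ)^j * ((N:ℝ)^j * x^N)) atTop (nhds 0) := by
    simpa using (tendsto_pow_const_mul_const_pow_of_lt_one j hx0 hx1).const_mul ((2:ℝ)^j)
  apply squeeze_zero' ?_ ?_ key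
  · filter_upwards with N
    positivity
  · filter_upwards [eventually_ge_atTop j] with N hN
    have h2 : N + j - j = N := by omega
    rw [h2]
    calc ((N + j).choose j : ℝ) * x ^ N
        ≤ ((N:ℝ) + j) ^ j * x ^ N := by
          apply mul_le_mul_of_nonneg_right _ (pow_nonneg hx0 N)
          calc ((N + j).choose j : ℝ) ≤ ((N + j : ℕ) : ℝ) ^ j := by
                exact_mod_cast Nat.choose_le_pow (N + j) j
            _ = ((N:ℝ) + j) ^ j := by push_cast; ring
      _ ≤ (2 * (N:ℝ)) ^ j * x ^ N := by
          apply mul_le_mul_of_nonneg_right _ (pow_nonneg hx0 N)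
          apply pow_le_pow_left₀ (by positivity)
          have : (j : ℝ) ≤ N := by exact_mod_cast hN
          linarith
      _ = (2:ℝ)^j * ((N:ℝ)^j * x^N) := by rw [mul_pow]; ring

lemma Rsum_tendsto {x : ℝ} (hx0 : 0 ≤ x) (hx1 : x < 1) (k : ℕ) :
    Tendsto (fun M : ℕ => Rsum x k M) atTop (nhds 0) := by
  unfold Rsum
  have : Tendsto (fun M : ℕ => ∑ j ∈ Finset.range (k+1),
      (M.choose j : ℝ) * x ^ (M - j) * (1 - x) ^ j) atTop
      (nhds (∑ j ∈ Finset.range (k+1), (0:ℝ))) := by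
    apply tendsto_finset_sum
    intro j _
    simpa using (choose_pow_tendsto hx0 hx1 j).mul_const ((1-x)^j)
  simpa using this

lemma hasSum_tail {x : ℝ} (hx0 : 0 ≤ x) (hx1 : x < 1) (k M : ℕ) (hkM : k ≤ M) :
    HasSum (fun m : ℕ => (((M+m).choose k : ℝ)) * x ^ (M+m-k) * (1-x) ^ (k+1))
      (Rsum x k M) := by
  have hnn : ∀ m : ℕ, 0 ≤ (((M+m).choose k : ℝ)) * x ^ (M+m-k) * (1-x) ^ (k+1) := by
    intro m
    have h1 : (0:ℝ) ≤ 1 - x := by linarith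
    positivity
  rw [hasSum_iff_tendsto_nat_of_nonneg hnn]
  have hpartial : ∀ n : ℕ, ∑ m ∈ Finset.range n,
      (((M+m).choose k : ℝ)) * x ^ (M+m-k) * (1-x) ^ (k+1)
      = Rsum x k M - Rsum x k (M + n) := by
    intro n
    calc ∑ m ∈ Finset.range n, (((M+m).choose k : ℝ)) * x ^ (M+m-k) * (1-x) ^ (k+1)
        = ∑ m ∈ Finset.range n, (Rsum x k (M + m) - Rsum x k (M + m + 1)) := by
          apply Finset.sum_congr rfl
          intro m _
          exact (Rsum_sub k (M+m) (le_trans hkM (Nat.le_add_right M m))).symm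
      _ = Rsum x k (M + 0) - Rsum x k (M + n) := by
          have := Finset.sum_range_sub' (fun i => Rsum x k (M + i)) n
          simpa [add_assoc] using this
      _ = Rsum x k M - Rsum x k (M + n) := by rw [Nat.add_zero]
  simp only [hpartial]
  have h2 : Tendsto (fun n : ℕ => Rsum x k (M + n)) atTop (nhds 0) :=
    (tendsto_add_atTop_iff_nat (f := fun M => Rsum x k M) M).mpr (Rsum_tendsto hx0 hx1 k) |>.congr (fun n => by rw [Nat.add_comm])
  simpa using (tendsto_const_nhds (x := Rsum x k M)).sub h2


lemma log_ratio_tendsto :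
    Tendsto (fun u : ℝ => Real.log (1 - u) / u) (nhdsWithin 0 (Set.Ioi 0)) (nhds (-1)) := by
  have hderiv : HasDerivAt Real.log 1 1 := by
    simpa using Real.hasDerivAt_log (one_ne_zero)
  have hslope := hasDerivAt_iff_tendsto_slope.mp hderiv
  have hmap : Tendsto (fun u : ℝ => 1 - u) (nhdsWithin 0 (Set.Ioi 0))
      (nhdsWithin 1 {(1:ℝ)}ᶜ) := by
    apply tendsto_nhdsWithin_of_tendsto_nhds_of_eventually_within
    · have : Tendsto (fun u : ℝ => 1 - u) (nhds 0) (nhds 1) := by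
        simpa using (tendsto_const_nhds (x := (1:ℝ))).sub (tendsto_id (x := nhds (0:ℝ)))
      exact this.mono_left nhdsWithin_le_nhds
    · filter_upwards [self_mem_nhdsWithin] with u hu
      simp only [mem_compl_iff, mem_singleton_iff]
      intro h
      have : u = 0 := by linarith
      exact absurd this (ne_of_gt hu)
  have hcomp := hslope.comp hmap
  have heq : ∀ u : ℝ, (slope Real.log 1 ∘ fun u : ℝ => 1 - u) u
      = - (Real.log (1 - u) / u) := by
    intro u
    simp only [Function.comp_apply, slope_def_field, Real.log_one]
    rw [show (1:ℝ) - u - 1 = -u by ring, sub_zero, div_neg]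
  have h2 : Tendsto (fun u : ℝ => - (Real.log (1 - u) / u))
      (nhdsWithin 0 (Set.Ioi 0)) (nhds 1) := by
    exact Tendsto.congr heq hcomp
  have := h2.neg
  simpa using this

lemma pow_exp_lim {u : ℝ → ℝ} {n : ℝ → ℕ} (hu0 : ∀ᶠ t in atTop, 0 < u t)
    (hu : Tendsto u atTop (nhds 0)) {L : ℝ}
    (hnu : Tendsto (fun t => (n t : ℝ) * u t) atTop (nhds L)) :
    Tendsto (fun t => (1 - u t) ^ n t) atTop (nhds (Real.exp (-L))) := by
  have hu1 : ∀ᶠ t in atTop, u t < 1 := hu.eventually_lt_const (by norm_num)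
  have hulim : Tendsto u atTop (nhdsWithin 0 (Set.Ioi 0)) :=
    tendsto_nhdsWithin_of_tendsto_nhds_of_eventually_within _ hu hu0
  have hratio : Tendsto (fun t => Real.log (1 - u t) / u t) atTop (nhds (-1)) :=
    log_ratio_tendsto.comp hulim
  have hprod : Tendsto (fun t => ((n t : ℝ) * u t) * (Real.log (1 - u t) / u t))
      atTop (nhds (L * (-1))) := hnu.mul hratio
  have hexp : Tendsto (fun t => Real.exp (((n t : ℝ) * u t) * (Real.log (1 - u t) / u t)))
      atTop (nhds (Real.exp (-L))) := by
    have := (Real.continuous_exp.tendsto (L * (-1))).comp hprod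
    simpa [mul_comm, Function.comp_def] using this
  apply Tendsto.congr' _ hexp
  filter_upwards [hu0, hu1] with t ht0 ht1
  have hne : u t ≠ 0 := ne_of_gt ht0
  have hpos : 0 < 1 - u t := by linarith
  have h1 : ((n t : ℝ) * u t) * (Real.log (1 - u t) / u t)
      = (n t : ℝ) * Real.log (1 - u t) := by field_simp
  rw [h1, Real.exp_nat_mul, Real.exp_log hpos]

lemma integral_pow_exp (k : ℕ) {w : ℝ} (hw : 0 ≤ w) :
    ∫ v in Set.Ioi w, v ^ k * Real.exp (-v)
      = Real.exp (-w) * ∑ j ∈ Finset.range (k+1),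
          ((k.factorial : ℝ) / (j.factorial : ℝ)) * w ^ j := by
  set c : ℕ → ℝ := fun j => (k.factorial : ℝ) / (j.factorial : ℝ) with hc
  have hck : c k = 1 := by
    simp [hc, div_self (by positivity : (k.factorial : ℝ) ≠ 0)]
  have hcsucc : ∀ j : ℕ, c (j+1) * ((j:ℝ)+1) = c j := by
    intro j
    simp only [hc, Nat.factorial_succ]
    push_cast
    field_simp
  have hderiv : ∀ v : ℝ, HasDerivAt
      (fun v => -(Real.exp (-v) * ∑ j ∈ Finset.range (k+1), c j * v ^ j))
      (v ^ k * Real.exp (-v)) v := by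
    intro v
    have hexp : HasDerivAt (fun v : ℝ => Real.exp (-v)) (-Real.exp (-v)) v := by
      simpa [Function.comp_def] using (Real.hasDerivAt_exp (-v)).comp v ((hasDerivAt_id v).neg)
    have hS : HasDerivAt (fun v : ℝ => ∑ j ∈ Finset.range (k+1), c j * v ^ j)
        (∑ j ∈ Finset.range k, c j * v ^ j) v := by
      have h1 : HasDerivAt (fun v : ℝ => ∑ j ∈ Finset.range (k+1), c j * v ^ j)
          (∑ j ∈ Finset.range (k+1), c j * ((j : ℝ) * v ^ (j-1))) v := by
        apply HasDerivAt.fun_sum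
        intro j _
        exact (hasDerivAt_pow j v).const_mul (c j)
      convert h1 using 1
      rw [Finset.sum_range_succ' (fun j => c j * ((j:ℝ) * v ^ (j-1))) k]
      simp only [Nat.cast_zero, zero_mul, mul_zero, add_zero, Nat.cast_succ,
        Nat.add_sub_cancel]
      apply Finset.sum_congr rfl
      intro j _
      rw [← hcsucc j]
      ring
    have hmain := (hexp.mul hS).neg
    refine hmain.congr_deriv ?_
    have hsum : ∑ j ∈ Finset.range (k+1), c j * v ^ j
        = (∑ j ∈ Finset.range k, c j * v ^ j) + v ^ k := by
      rw [Finset.sum_range_succ, hck]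
      ring
    rw [hsum]
    ring
  have htop : Tendsto
      (fun v : ℝ => -(Real.exp (-v) * ∑ j ∈ Finset.range (k+1), c j * v ^ j))
      atTop (nhds 0) := by
    have h1 : ∀ v : ℝ, -(Real.exp (-v) * ∑ j ∈ Finset.range (k+1), c j * v ^ j)
        = -(∑ j ∈ Finset.range (k+1), c j * (v ^ j * Real.exp (-v))) := by
      intro v
      rw [Finset.mul_sum]
      congr 1
      apply Finset.sum_congr rfl
      intro j _
      ring
    simp only [h1]
    have h2 : Tendsto (fun v : ℝ => ∑ j ∈ Finset.range (k+1), c j * (v ^ j * Real.exp (-v)))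
        atTop (nhds (∑ j ∈ Finset.range (k+1), c j * 0)) := by
      apply tendsto_finset_sum
      intro j _
      exact (Real.tendsto_pow_mul_exp_neg_atTop_nhds_zero j).const_mul (c j)
    simpa using h2.neg
  have hint := MeasureTheory.integral_Ioi_of_hasDerivAt_of_nonneg' (g' := fun v => v ^ k * Real.exp (-v))
    (fun x _ => hderiv x)
    (fun x hx => by
      have hx0 : (0:ℝ) ≤ x := le_trans hw (le_of_lt hx)
      positivity)
    htop
  rw [hint]
  ring

lemma tsum_closed {q p r : ℝ} (hp0 : 0 ≤ p) (hp1 : p < 1) {R : ℝ} {k M : ℕ}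
    (hM : ∀ m : ℕ, R ≤ (m:ℝ)+1 ↔ M ≤ m) (hkM : k ≤ M) :
    ∑' m : ℕ, (if R ≤ (m:ℝ)+1 then (m.choose k : ℝ) * q^k * p^(m-k) * r else 0)
    = Rsum p k M * (q^k * r / (1-p)^(k+1)) := by
  classical
  set f : ℕ → ℝ := fun m => if R ≤ (m:ℝ)+1 then (m.choose k : ℝ) * q^k * p^(m-k) * r else 0
    with hf
  have hu : (0:ℝ) < 1 - p := by linarith
  have hs := hasSum_tail hp0 hp1 k M hkM
  have hs2 := hs.mul_right (q^k * r / (1-p)^(k+1))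
  have heq : ∀ m : ℕ, f (m + M)
      = (((M+m).choose k : ℝ) * p^(M+m-k) * (1-p)^(k+1)) * (q^k * r / (1-p)^(k+1)) := by
    intro m
    rw [hf]
    simp only
    rw [if_pos ((hM (m+M)).mpr (by omega)), show m + M = M + m by omega]
    have hne : ((1:ℝ)-p)^(k+1) ≠ 0 := by positivity
    field_simp
  have hs3 : HasSum (fun m => f (m + M))
      (Rsum p k M * (q^k * r / (1-p)^(k+1)) - ∑ i ∈ Finset.range M, f i) := by
    have hzero : ∑ i ∈ Finset.range M, f i = 0 := by
      apply Finset.sum_eq_zero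
      intro i hi
      rw [hf]
      simp only
      rw [if_neg]
      intro hcon
      have := (hM i).mp hcon
      have := Finset.mem_range.mp hi
      omega
    rw [hzero, sub_zero]
    have hfe : (fun m => f (m + M))
        = fun m => (((M+m).choose k : ℝ) * p^(M+m-k) * (1-p)^(k+1))
          * (q^k * r / (1-p)^(k+1)) := funext heq
    rw [hfe]
    exact hs2
  exact ((hasSum_nat_add_iff' M).mp hs3).tsum_eq

/-- for `k ≥ 0`, `z > 0` and `z_β = z/F̄(β(t))`,
`P{ν ≥ z_β, N₊(ν)=k, N₋(ν)=0} → (g(1-g)^k a_{k,0}/k!) ∫_{z/g}^∞ v^k e^{-v} dv`. -/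
theorem shock_tail_asymptotic_zero
    {Ω : Type*} [MeasurableSpace Ω] (P : Measure Ω) [IsProbabilityMeasure P]
    (μ : Measure ℝ) [IsProbabilityMeasure μ]
    (X : ℕ → Ω → ℝ)
    (hindep : iIndepFun X P)
    (hdist : ∀ i, Measure.map (X i) P = μ)
    (hcont : ∀ x : ℝ, μ {x} = 0)
    (γ β α : ℝ → ℝ) (b c : ℝ → ℕ → ℝ)
    (hγβ : ∀ t, γ t < β t)
    (hb : ∀ t, Monotone (b t)) (hc : ∀ t, Monotone (c t))
    (hb0 : ∀ t, b t 0 = 0) (hc0 : ∀ t, c t 0 = 0)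
    (hβα : ∀ t, ∀ k l : ℕ, β t ≤ α t + b t k - c t l)
    (hγpos : ∀ t, 0 < survival μ (γ t)) (hβpos : ∀ t, 0 < survival μ (β t))
    (hβ0 : Tendsto (fun t => survival μ (β t)) atTop (nhds 0))
    (g : ℝ) (hg : g ∈ Set.Ioo (0 : ℝ) 1)
    (hgt : Tendsto (fun t => survival μ (β t) / survival μ (γ t)) atTop (nhds g))
    (a : ℕ → ℕ → ℝ) (ha : ∀ k l, a k l ∈ Set.Ioc (0 : ℝ) 1)
    (hat : ∀ k l : ℕ, Tendsto
      (fun t => survival μ (α t + b t k - c t l) / survival μ (β t)) atTop (nhds (a k l)))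
    (k : ℕ) (z : ℝ) (hz : 0 < z) :
    Tendsto (fun t =>
        (P {ω | (∃ i, fatalShock (γ t) (β t) (α t) (b t) (c t) (fun j => X j ω) i) ∧
          z / survival μ (β t)
            ≤ (nuShock (γ t) (β t) (α t) (b t) (c t) (fun j => X j ω) : ℝ) + 1 ∧
          (shockCounts (γ t) (β t) (α t) (b t) (c t) (fun j => X j ω)
            (nuShock (γ t) (β t) (α t) (b t) (c t) (fun j => X j ω))) = (k, 0)}).toReal)
      atTop
      (nhds (g * (1 - g) ^ k * a k 0 / (k.factorial : ℝ)
        * ∫ v in Set.Ioi (z / g), v ^ k * Real.exp (-v))) := by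
  classical
  obtain ⟨hg0, hg1⟩ := hg
  have hw0 : 0 < z / g := div_pos hz hg0
  have hsne : ∀ t, survival μ (β t) ≠ 0 := fun t => ne_of_gt (hβpos t)
  have hune : ∀ t, survival μ (γ t) ≠ 0 := fun t => ne_of_gt (hγpos t)
  have hule1 : ∀ t, survival μ (γ t) ≤ 1 := fun t => survival_le_one _
  have hp0 : ∀ t, (0:ℝ) ≤ 1 - survival μ (γ t) := fun t => by linarith [hule1 t]
  have hp1 : ∀ t, 1 - survival μ (γ t) < 1 := fun t => by linarith [hγpos t]
  set M : ℝ → ℕ := fun t => ⌈z / survival μ (β t) - 1⌉₊ with hM_def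
  -- basic limits
  have hu0 : Tendsto (fun t => survival μ (γ t)) atTop (nhds 0) := by
    have h1 : Tendsto (fun t => survival μ (β t) / (survival μ (β t) / survival μ (γ t)))
        atTop (nhds (0 / g)) := hβ0.div hgt (ne_of_gt hg0)
    rw [zero_div] at h1
    exact h1.congr fun t => by
      rw [div_div_eq_mul_div, mul_comm (survival μ (β t)) (survival μ (γ t)),
        mul_div_assoc, div_self (hsne t), mul_one]
  have hsel : Tendsto (fun t => survival μ (β t)) atTop (nhdsWithin 0 (Set.Ioi 0)) :=
    tendsto_nhdsWithin_of_tendsto_nhds_of_eventually_within _ hβ0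
      (Eventually.of_forall hβpos)
  have hzs : Tendsto (fun t => z / survival μ (β t)) atTop atTop := by
    have hinv : Tendsto (fun t => (survival μ (β t))⁻¹) atTop atTop :=
      tendsto_inv_nhdsGT_zero.comp hsel
    exact (hinv.const_mul_atTop hz).congr fun t => (div_eq_mul_inv z _).symm
  have hMreal : Tendsto (fun t => (M t : ℝ)) atTop atTop := by
    apply tendsto_atTop_mono _ (tendsto_atTop_add_const_right atTop (-1) hzs)
    intro t
    have h1 := Nat.le_ceil (z / survival μ (β t) - 1)
    have h2 : ((⌈z / survival μ (β t) - 1⌉₊ : ℕ) : ℝ) = (M t : ℝ) := rfl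
    linarith
  have hMs : Tendsto (fun t => (M t : ℝ) * survival μ (β t)) atTop (nhds z) := by
    apply tendsto_of_tendsto_of_tendsto_of_le_of_le'
      (g := fun t => z - survival μ (β t)) (h := fun _ => z)
    · simpa using tendsto_const_nhds.sub hβ0
    · exact tendsto_const_nhds
    · filter_upwards with t
      have h1 := Nat.le_ceil (z / survival μ (β t) - 1)
      have h2 : (z / survival μ (β t) - 1) * survival μ (β t)
          ≤ (M t : ℝ) * survival μ (β t) :=
        mul_le_mul_of_nonneg_right h1 (le_of_lt (hβpos t))
      calc z - survival μ (β t)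
          = (z / survival μ (β t) - 1) * survival μ (β t) := by
            rw [sub_mul, div_mul_cancel₀ _ (hsne t), one_mul]
        _ ≤ _ := h2
    · filter_upwards [hzs.eventually_ge_atTop 1] with t ht
      have h0 : 0 ≤ z / survival μ (β t) - 1 := by linarith
      have h1 : (M t : ℝ) < z / survival μ (β t) := by
        have h3 := Nat.ceil_lt_add_one h0
        have h2 : ((⌈z / survival μ (β t) - 1⌉₊ : ℕ) : ℝ) = (M t : ℝ) := rfl
        linarith
      calc (M t:ℝ) * survival μ (β t)
          ≤ (z / survival μ (β t)) * survival μ (β t) :=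
            mul_le_mul_of_nonneg_right (le_of_lt h1) (le_of_lt (hβpos t))
        _ = z := div_mul_cancel₀ z (hsne t)
  have hus : Tendsto (fun t => survival μ (γ t) / survival μ (β t)) atTop (nhds g⁻¹) :=
    (hgt.inv₀ (ne_of_gt hg0)).congr fun t => by rw [inv_div]
  have hMu : Tendsto (fun t => (M t : ℝ) * survival μ (γ t)) atTop (nhds (z / g)) := by
    have h1 := hMs.mul hus
    rw [show z / g = z * g⁻¹ from div_eq_mul_inv z g]
    exact h1.congr fun t => by
      rw [mul_assoc, mul_comm (survival μ (β t)), div_mul_cancel₀ _ (hsne t)]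
  have hMk : ∀ᶠ t in atTop, k ≤ M t := by
    filter_upwards [hMreal.eventually_ge_atTop (k:ℝ)] with t ht
    exact_mod_cast ht
  have hra : Tendsto (fun t => survival μ (α t + b t k) / survival μ (β t)) atTop
      (nhds (a k 0)) :=
    (hat k 0).congr fun t => by rw [hc0 t, sub_zero]
  -- component limits
  have hqu : Tendsto (fun t => (survival μ (γ t) - survival μ (β t)) / survival μ (γ t))
      atTop (nhds (1 - g)) := by
    have h1 := (tendsto_const_nhds (x := (1:ℝ))).sub hgt
    exact h1.congr fun t => by rw [sub_div, div_self (hune t)]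
  have hru : Tendsto (fun t => survival μ (α t + b t k) / survival μ (γ t)) atTop
      (nhds (a k 0 * g)) := by
    have h1 := hra.mul hgt
    exact h1.congr fun t => by
      rw [div_mul_div_comm, mul_comm (survival μ (α t + b t k)) (survival μ (β t)),
        mul_div_mul_left _ _ (hsne t)]
  have hterm : ∀ j : ℕ, Tendsto (fun t => ((M t).choose j : ℝ)
        * (1 - survival μ (γ t)) ^ (M t - j) * (survival μ (γ t)) ^ j)
      atTop (nhds (((z/g)^j / (j.factorial : ℝ)) * Real.exp (-(z/g)))) := by
    intro j
    have hMj : ∀ᶠ t in atTop, j ≤ M t := by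
      filter_upwards [hMreal.eventually_ge_atTop (j:ℝ)] with t ht
      exact_mod_cast ht
    have part1 : Tendsto (fun t => ((M t).choose j : ℝ) * (survival μ (γ t)) ^ j) atTop
        (nhds ((z/g)^j / (j.factorial : ℝ))) := by
      have hfac : ∀ i : ℕ, Tendsto (fun t => ((M t : ℝ) - i) * survival μ (γ t)) atTop
          (nhds (z/g)) := by
        intro i
        have h1 := hMu.sub (hu0.const_mul (i:ℝ))
        rw [mul_zero, sub_zero] at h1
        exact h1.congr fun t => by ring
      have hprod : Tendsto (fun t => ∏ i ∈ Finset.range j,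
          (((M t : ℝ) - i) * survival μ (γ t))) atTop (nhds ((z/g)^j)) := by
        have h1 := tendsto_finset_prod (Finset.range j)
          (fun i (_ : i ∈ Finset.range j) => hfac i)
        simpa [Finset.prod_const, Finset.card_range, div_pow] using h1
      have h2 := hprod.div_const (j.factorial : ℝ)
      apply Tendsto.congr' _ h2
      filter_upwards [hMj] with t htj
      have hcast : (((M t).choose j : ℝ)) * (j.factorial : ℝ)
          = ∏ i ∈ Finset.range j, ((M t : ℝ) - i) := by
        have h1 : (M t).descFactorial j = j.factorial * (M t).choose j :=
          Nat.descFactorial_eq_factorial_mul_choose _ _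
        have h2 : (M t).descFactorial j = ∏ i ∈ Finset.range j, (M t - i) :=
          Nat.descFactorial_eq_prod_range _ _
        have h3 : (((M t).descFactorial j : ℕ) : ℝ)
            = ∏ i ∈ Finset.range j, ((M t : ℝ) - i) := by
          rw [h2]
          push_cast
          apply Finset.prod_congr rfl
          intro i hi
          have : i ≤ M t := le_trans (le_of_lt (Finset.mem_range.mp hi)) htj
          rw [Nat.cast_sub this]
        rw [h1] at h3
        push_cast at h3
        linarith [h3]
      rw [Finset.prod_mul_distrib, Finset.prod_const, Finset.card_range, ← hcast]
      have hjf : (j.factorial : ℝ) ≠ 0 := by positivity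
      field_simp
    have part2 : Tendsto (fun t => (1 - survival μ (γ t)) ^ (M t - j)) atTop
        (nhds (Real.exp (-(z/g)))) := by
      have hnu : Tendsto (fun t => ((M t - j : ℕ) : ℝ) * survival μ (γ t)) atTop
          (nhds (z/g)) := by
        have h1 := hMu.sub (hu0.const_mul (j:ℝ))
        rw [mul_zero, sub_zero] at h1
        apply Tendsto.congr' _ h1
        filter_upwards [hMj] with t htj
        rw [Nat.cast_sub htj]
        ring
      exact pow_exp_lim (Eventually.of_forall hγpos) hu0 hnu
    have hmul := part1.mul part2
    apply hmul.congr
    intro t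
    ring
  have hRsum : Tendsto (fun t => Rsum (1 - survival μ (γ t)) k (M t)) atTop
      (nhds (∑ j ∈ Finset.range (k+1),
        ((z/g)^j / (j.factorial:ℝ)) * Real.exp (-(z/g)))) := by
    have h1 := tendsto_finset_sum (Finset.range (k+1))
      (fun j (_ : j ∈ Finset.range (k+1)) => hterm j)
    apply h1.congr
    intro t
    unfold Rsum
    apply Finset.sum_congr rfl
    intro j _
    rw [sub_sub_cancel]
  have hfactor : Tendsto (fun t =>
      (survival μ (γ t) - survival μ (β t))^k * survival μ (α t + b t k)
        / (1 - (1 - survival μ (γ t)))^(k+1)) atTop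
      (nhds ((1-g)^k * (a k 0 * g))) := by
    have h1 := (hqu.pow k).mul hru
    apply h1.congr
    intro t
    rw [sub_sub_cancel, div_pow, pow_succ, div_mul_div_comm]
  have hL := hRsum.mul hfactor
  -- value identification
  have hval : g * (1 - g) ^ k * a k 0 / (k.factorial : ℝ)
      * ∫ v in Set.Ioi (z / g), v ^ k * Real.exp (-v)
      = (∑ j ∈ Finset.range (k+1), ((z/g)^j / (j.factorial:ℝ)) * Real.exp (-(z/g)))
        * ((1-g)^k * (a k 0 * g)) := by
    rw [integral_pow_exp k (le_of_lt hw0)]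
    rw [Finset.mul_sum, Finset.mul_sum, Finset.sum_mul]
    apply Finset.sum_congr rfl
    intro j hj
    have hkf : (k.factorial : ℝ) ≠ 0 := by positivity
    have hjf : (j.factorial : ℝ) ≠ 0 := by positivity
    field_simp
  rw [hval]
  apply Tendsto.congr' _ hL
  filter_upwards [hMk] with t htk
  have hMiff : ∀ m : ℕ, z / survival μ (β t) ≤ (m:ℝ)+1 ↔ M t ≤ m := by
    intro m
    rw [hM_def]
    simp only
    rw [Nat.ceil_le]
    constructor <;> intro h <;> linarith
  rw [prob_eq P μ X hindep hdist hcont (γ t) (β t) (α t) (b t) (c t) (hγβ t) (hβα t)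
    (hc0 t) k (z / survival μ (β t)),
    tsum_closed (hp0 t) (hp1 t) hMiff htk]
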